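/- Let X, Y be locally convex Hausdorff real topological vector spaces, F : X × Y → ℝ ∪ {±∞}, and h : X → ℝ ∪ {+∞} proper convex lsc. Assume (H₅): for every a' ∈ dom h*, inf_{x∈X}(F(x,0) − ⟨a',x⟩) = inf_{x∈X}(F**(x,0) − ⟨a',x⟩) ≠ +∞, and (H₆): the set {(x',s) ∈ X*×ℝ : ∃μ ∈ Y*, F*(x',μ) ≤ s} is weak*-closed regarding gph h*. Then [∀x ∈ X, F(x,0) ≥ h(x)] holds if and only if [∀a' ∈ dom h*, ∃μ ∈ Y* with F*(a',μ) ≤ h*(a')]. -/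

import Mathlib

variable {X Y : Type*}
  [AddCommGroup X] [Module ℝ X] [TopologicalSpace X] [IsTopologicalAddGroup X]
  [ContinuousSMul ℝ X] [LocallyConvexSpace ℝ X] [T2Space X]
  [AddCommGroup Y] [Module ℝ Y] [TopologicalSpace Y] [IsTopologicalAddGroup Y]
  [ContinuousSMul ℝ Y] [LocallyConvexSpace ℝ Y] [T2Space Y]

/-- Fenchel conjugate of `F : X × Y → ℝ̄`, with first dual variable in the
weak* dual of `X`. -/
noncomputable def wConj (F : X → Y → EReal) (x' : WeakDual ℝ X) (y' : Y →L[ℝ] ℝ) : EReal :=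
  ⨆ p : X × Y, (((x' p.1 + y' p.2 : ℝ) : EReal) - F p.1 p.2)

/-- Fenchel biconjugate of `F : X × Y → ℝ̄` on `X × Y`. -/
noncomputable def wBiconj (F : X → Y → EReal) (x : X) (y : Y) : EReal :=
  ⨆ w : WeakDual ℝ X × (Y →L[ℝ] ℝ), (((w.1 x + w.2 y : ℝ) : EReal) - wConj F w.1 w.2)

/-- Fenchel conjugate of `h : X → ℝ ∪ {+∞}` on the weak* dual of `X`. -/
noncomputable def hConj (h : X → EReal) (a' : WeakDual ℝ X) : EReal :=
  ⨆ x : X, (((a' x : ℝ) : EReal) - h x)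

set_option linter.unusedSectionVars false
set_option maxHeartbeats 1000000

section Aux

noncomputable instance : LocallyConvexSpace ℝ (WeakDual ℝ X) :=
  WeakBilin.locallyConvexSpace

lemma sproc_ereal_cases (x : EReal) : x = ⊥ ∨ (∃ v : ℝ, x = (v : EReal)) ∨ x = ⊤ := by
  induction x using EReal.rec with
  | bot => exact Or.inl rfl
  | coe v => exact Or.inr (Or.inl ⟨v, rfl⟩)
  | top => exact Or.inr (Or.inr rfl)

lemma sproc_exists_pos_mul_lt (m d : ℝ) (hd : 0 < d) : ∃ ε : ℝ, 0 < ε ∧ ε * m < d := by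
  rcases le_or_gt m 0 with hm | hm
  · exact ⟨1, one_pos, by nlinarith⟩
  · refine ⟨d / (2 * m), by positivity, ?_⟩
    rw [div_mul_eq_mul_div, div_lt_iff₀ (by linarith)]
    nlinarith

lemma sproc_not_forall_affine {A c u : ℝ} (hc : c ≠ 0) (h : ∀ s : ℝ, A + s * c < u) :
    False := by
  have := h ((u - A) / c)
  rw [div_mul_cancel₀ _ hc] at this
  linarith

lemma sproc_nonpos {A c u : ℝ} (h : ∀ n : ℝ, 0 ≤ n → A + n * c < u) : c ≤ 0 := by
  by_contra hc
  push_neg at hc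
  have h0 := h 0 le_rfl
  have hn := h ((u - A) / c) (le_of_lt (div_pos (by linarith) hc))
  rw [div_mul_cancel₀ _ (ne_of_gt hc)] at hn
  linarith

lemma sproc_swap {r : ℝ} {b c : EReal} (hc : c ≠ ⊤) (h : (r : EReal) - b ≤ c) :
    (r : EReal) - c ≤ b := by
  rcases sproc_ereal_cases b with hb | ⟨v, hb⟩ | hb
  · rw [hb, EReal.coe_sub_bot] at h
    exact absurd (top_le_iff.1 h) hc
  · rcases sproc_ereal_cases c with hcc | ⟨w, hcc⟩ | hcc
    · rw [hb, hcc, ← EReal.coe_sub] at h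
      exact absurd (le_bot_iff.1 h) (EReal.coe_ne_bot _)
    · rw [hb, hcc, ← EReal.coe_sub] at h
      rw [hb, hcc, ← EReal.coe_sub]
      exact_mod_cast by have := EReal.coe_le_coe_iff.1 h; linarith
    · exact absurd hcc hc
  · rw [hb]; exact le_top

lemma sproc_minorant {r t : ℝ} {b : EReal} (hb : b ≠ ⊥) (h : (r : EReal) - b ≤ (t : EReal)) :
    ((r - t : ℝ) : EReal) ≤ b := by
  rcases sproc_ereal_cases b with hbb | ⟨v, hbb⟩ | hbb
  · exact absurd hbb hb
  · rw [hbb, ← EReal.coe_sub] at h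
    rw [hbb]
    exact_mod_cast by have := EReal.coe_le_coe_iff.1 h; linarith
  · rw [hbb]; exact le_top

lemma sproc_dec (Z : Type*) [AddCommGroup Z] [Module ℝ Z] [TopologicalSpace Z]
    [IsTopologicalAddGroup Z] [ContinuousSMul ℝ Z]
    (f : (Z × ℝ) →L[ℝ] ℝ) (y : Z) (s : ℝ) : f (y, s) = f (y, 0) + s * f (0, 1) := by
  have hys : (y, s) = ((y, (0 : ℝ)) : Z × ℝ) + s • ((0 : Z), (1 : ℝ)) := by
    simp [Prod.ext_iff]
  rw [hys, map_add, map_smul, smul_eq_mul]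

lemma sproc_exists_eval (φ : WeakDual ℝ X →L[ℝ] ℝ) : ∃ x₀ : X, ∀ x' : WeakDual ℝ X, φ x' = x' x₀ := by
  classical
  have hUmem : φ ⁻¹' (Metric.ball (0:ℝ) 1) ∈ nhds (0 : WeakDual ℝ X) := by
    refine (Metric.isOpen_ball.preimage φ.continuous).mem_nhds ?_
    simp
  have basis := LinearMap.hasBasis_weakBilin (topDualPairing ℝ X)
  obtain ⟨V, hV, hVsub⟩ := basis.mem_iff.mp hUmem
  obtain ⟨s, r, hr, rfl⟩ := (SeminormFamily.basisSets_iff _).mp hV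
  have key : ∀ x' : WeakDual ℝ X, (∀ y ∈ s, x' y = 0) → φ x' = 0 := by
    intro x' hx'
    by_contra hne
    have h2 : ∀ k : ℝ, (k • x') ∈ (s.sup ((topDualPairing ℝ X).toSeminormFamily)).ball 0 r := by
      intro k
      refine (Seminorm.mem_ball_zero _).2 ?_
      refine Seminorm.finset_sup_apply_lt hr ?_
      intro y hy
      change ‖(k • x') y‖ < r
      show ‖k • x' y‖ < r
      rw [hx' y hy]
      simpa using hr
    have h3 : (2 / φ x') • x' ∈ φ ⁻¹' Metric.ball (0:ℝ) 1 := hVsub (h2 (2 / φ x'))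
    simp only [Set.mem_preimage, Metric.mem_ball, dist_zero_right, map_smul, smul_eq_mul] at h3
    rw [div_mul_cancel₀ _ hne] at h3
    norm_num at h3
  let L : {y // y ∈ s} → WeakDual ℝ X →ₗ[ℝ] ℝ := fun y =>
    { toFun := fun x' => x' y.1, map_add' := fun _ _ => rfl, map_smul' := fun _ _ => rfl }
  have hker : (⨅ y : {y // y ∈ s}, LinearMap.ker (L y)) ≤ LinearMap.ker (φ : WeakDual ℝ X →ₗ[ℝ] ℝ) := by
    intro x' hx'
    simp only [Submodule.mem_iInf, LinearMap.mem_ker] at hx' ⊢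
    exact key x' (fun y hy => hx' ⟨y, hy⟩)
  have hspan := mem_span_of_iInf_ker_le_ker hker
  let T : X →ₗ[ℝ] (WeakDual ℝ X →ₗ[ℝ] ℝ) :=
    { toFun := fun y =>
        { toFun := fun x' => x' y, map_add' := fun _ _ => rfl, map_smul' := fun _ _ => rfl },
      map_add' := fun y z => by ext x'; exact map_add x' y z,
      map_smul' := fun k y => by ext x'; exact map_smul x' k y }
  have hrange : Submodule.span ℝ (Set.range L) ≤ LinearMap.range T := by
    rw [Submodule.span_le]
    rintro _ ⟨y, rfl⟩
    exact ⟨y.1, by ext x'; rfl⟩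
  obtain ⟨x₀, hx₀⟩ := hrange hspan
  exact ⟨x₀, fun x' => (LinearMap.congr_fun hx₀ x').symm⟩

end Aux

/-- Corollary 4.1: under `(H₅)` and `(H₆)` the `S^h_F`-procedure is valid, i.e.
`(𝔸_h) ⟺ (𝔹_h)`. -/
theorem stmt_17 (F : X → Y → EReal) (h : X → EReal)
    (hbot : ∀ x, h x ≠ ⊥) (hproper : ∃ x, h x ≠ ⊤)
    (hconvex : Convex ℝ {p : X × ℝ | h p.1 ≤ (p.2 : EReal)})
    (hlsc : LowerSemicontinuous h)
    (H5 : ∀ a' : WeakDual ℝ X, hConj h a' ≠ ⊤ →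
      (⨅ x : X, (F x 0 - ((a' x : ℝ) : EReal))) =
          (⨅ x : X, (wBiconj F x 0 - ((a' x : ℝ) : EReal))) ∧
        (⨅ x : X, (F x 0 - ((a' x : ℝ) : EReal))) ≠ ⊤)
    (H6 : closure {z : WeakDual ℝ X × ℝ | ∃ μ : Y →L[ℝ] ℝ,
            wConj F z.1 μ ≤ (z.2 : EReal)} ∩
          {z : WeakDual ℝ X × ℝ | hConj h z.1 = (z.2 : EReal)} =
        {z : WeakDual ℝ X × ℝ | ∃ μ : Y →L[ℝ] ℝ, wConj F z.1 μ ≤ (z.2 : EReal)} ∩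
          {z : WeakDual ℝ X × ℝ | hConj h z.1 = (z.2 : EReal)}) :
    (∀ x : X, h x ≤ F x 0) ↔
      ∀ a' : WeakDual ℝ X, hConj h a' ≠ ⊤ →
        ∃ μ : Y →L[ℝ] ℝ, wConj F a' μ ≤ hConj h a' := by
  constructor
  · -- (A) → (B)
    intro hA a' hne
    obtain ⟨x₀p, hx₀p⟩ := hproper
    obtain ⟨t₀p, ht₀p⟩ : ∃ t₀ : ℝ, h x₀p = (t₀ : EReal) :=
      ⟨_, (EReal.coe_toReal hx₀p (hbot x₀p)).symm⟩
    have hbot' : hConj h a' ≠ ⊥ := by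
      intro hcb
      have h1 : ((a' x₀p : ℝ) : EReal) - h x₀p ≤ hConj h a' :=
        le_iSup (fun x => ((a' x : ℝ) : EReal) - h x) x₀p
      rw [hcb, le_bot_iff, ht₀p, ← EReal.coe_sub] at h1
      exact EReal.coe_ne_bot _ h1
    set t : ℝ := (hConj h a').toReal with htdef
    have ht : hConj h a' = (t : EReal) := (EReal.coe_toReal hne hbot').symm
    have h5 := H5 a' hne
    have hlow : ((-t : ℝ) : EReal) ≤ ⨅ x : X, (F x 0 - ((a' x : ℝ) : EReal)) := by
      refine le_iInf fun x => ?_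
      have h1 : ((a' x : ℝ) : EReal) - h x ≤ (t : EReal) := by
        rw [← ht]; exact le_iSup (fun x => ((a' x : ℝ) : EReal) - h x) x
      have h2 := sproc_minorant (hbot x) h1
      calc ((-t : ℝ) : EReal) = ((a' x - t : ℝ) : EReal) - ((a' x : ℝ) : EReal) := by
            rw [← EReal.coe_sub]; norm_num
        _ ≤ h x - ((a' x : ℝ) : EReal) := EReal.sub_le_sub h2 le_rfl
        _ ≤ F x 0 - ((a' x : ℝ) : EReal) := EReal.sub_le_sub (hA x) le_rfl
    have hcl : (a', t) ∈ closure {z : WeakDual ℝ X × ℝ | ∃ μ : Y →L[ℝ] ℝ,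
        wConj F z.1 μ ≤ (z.2 : EReal)} := by
      by_contra hnot
      set Eset := {z : WeakDual ℝ X × ℝ | ∃ μ : Y →L[ℝ] ℝ, wConj F z.1 μ ≤ (z.2 : EReal)}
        with hEdef
      have hEconv : Convex ℝ Eset := by
        rintro ⟨x1, s1⟩ ⟨μ1, hμ1⟩ ⟨x2, s2⟩ ⟨μ2, hμ2⟩ θ σ hθ hσ hθσ
        refine ⟨θ • μ1 + σ • μ2, iSup_le fun p => ?_⟩
        have hb1 : ((x1 p.1 + μ1 p.2 : ℝ) : EReal) - F p.1 p.2 ≤ ((s1 : ℝ) : EReal) :=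
          le_trans (le_iSup (fun p : X × Y =>
            ((x1 p.1 + μ1 p.2 : ℝ) : EReal) - F p.1 p.2) p) hμ1
        have hb2 : ((x2 p.1 + μ2 p.2 : ℝ) : EReal) - F p.1 p.2 ≤ ((s2 : ℝ) : EReal) :=
          le_trans (le_iSup (fun p : X × Y =>
            ((x2 p.1 + μ2 p.2 : ℝ) : EReal) - F p.1 p.2) p) hμ2
        have heval : ((θ • (x1, s1) + σ • (x2, s2) : WeakDual ℝ X × ℝ).1) p.1
            = θ * x1 p.1 + σ * x2 p.1 := rfl
        have heval2 : (θ • μ1 + σ • μ2) p.2 = θ * μ1 p.2 + σ * μ2 p.2 := rfl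
        have hsnd : ((θ • (x1, s1) + σ • (x2, s2) : WeakDual ℝ X × ℝ).2) = θ * s1 + σ * s2 := rfl
        rw [heval, heval2, hsnd]
        rcases sproc_ereal_cases (F p.1 p.2) with hF | ⟨v, hF⟩ | hF
        · rw [hF, EReal.coe_sub_bot] at hb1
          exact absurd (top_le_iff.1 hb1) (EReal.coe_ne_top s1)
        · rw [hF, ← EReal.coe_sub] at hb1 hb2
          rw [hF, ← EReal.coe_sub]
          have r1 := EReal.coe_le_coe_iff.1 hb1
          have r2 := EReal.coe_le_coe_iff.1 hb2
          refine EReal.coe_le_coe_iff.2 ?_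
          have hv : θ * v + σ * v = v := by rw [← add_mul, hθσ, one_mul]
          nlinarith [mul_le_mul_of_nonneg_left r1 hθ, mul_le_mul_of_nonneg_left r2 hσ, hv]
        · rw [hF, EReal.sub_top]; exact bot_le
      have hEne : ∃ z : WeakDual ℝ X × ℝ, z ∈ Eset := by
        by_contra hemp
        push_neg at hemp
        have hall : ∀ (x' : WeakDual ℝ X) (μ : Y →L[ℝ] ℝ), wConj F x' μ = ⊤ := by
          intro x' μ
          by_contra hW
          exact hemp (x', (wConj F x' μ).toReal) ⟨μ, EReal.le_coe_toReal hW⟩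
        have hbic : ∀ x : X, wBiconj F x 0 = ⊥ := by
          intro x
          rw [wBiconj]
          simp [hall, EReal.sub_top]
        have h51 := h5.1
        have hbb : (⨅ x : X, (wBiconj F x 0 - ((a' x : ℝ) : EReal))) = ⊥ := by
          refine le_bot_iff.1 (le_trans (iInf_le _ 0) ?_)
          rw [hbic 0, EReal.bot_sub]
        rw [hbb] at h51
        rw [h51, le_bot_iff] at hlow
        exact EReal.coe_ne_bot _ hlow
      obtain ⟨⟨x1', s1'⟩, hz1⟩ := hEne
      obtain ⟨f, u, hfu0, hfa0⟩ :=
        geometric_hahn_banach_closed_point (hEconv.closure) isClosed_closure hnot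
      obtain ⟨x₀, hx₀⟩ := sproc_exists_eval (f.comp (ContinuousLinearMap.inl ℝ (WeakDual ℝ X) ℝ))
      set c : ℝ := f (0, 1) with hcdef
      have hdecf : ∀ z : WeakDual ℝ X × ℝ, f z = z.1 x₀ + z.2 * c := by
        rintro ⟨x', s⟩
        rw [sproc_dec (WeakDual ℝ X) f x' s]
        have h9 : f (x', 0) = x' x₀ := by
          have h8 := hx₀ x'
          rwa [ContinuousLinearMap.comp_apply, ContinuousLinearMap.inl_apply] at h8
        rw [h9]
      have hEf : ∀ z ∈ Eset, z.1 x₀ + z.2 * c < u := by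
        intro z hz
        have h9 := hfu0 z (subset_closure hz)
        rwa [hdecf z] at h9
      have hau : u < a' x₀ + t * c := by
        have h9 := hfa0
        rw [hdecf (a', t)] at h9
        exact h9
      have hup : ∀ (x' : WeakDual ℝ X) (s s' : ℝ), (x', s) ∈ Eset → s ≤ s' → (x', s') ∈ Eset := by
        rintro x' s s' ⟨μ, hμ⟩ hss
        exact ⟨μ, hμ.trans (EReal.coe_le_coe_iff.2 hss)⟩
      have hc : c ≤ 0 := by
        refine sproc_nonpos (A := x1' x₀ + s1' * c) (u := u) fun n hn => ?_
        have h9 : x1' x₀ + (s1' + n) * c < u :=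
          hEf (x1', s1' + n) (hup x1' s1' (s1' + n) hz1 (by linarith))
        have h10 : x1' x₀ + (s1' + n) * c = (x1' x₀ + s1' * c) + n * c := by ring
        linarith [h10 ▸ h9]
      rcases hc.lt_or_eq with hneg | h0
      · -- c < 0
        have hdpos : (0 : ℝ) < (-c)⁻¹ := inv_pos.2 (by linarith)
        set d : ℝ := (-c)⁻¹ with hddef
        have hdc : d * c = -1 := by
          have h9 : d * (-c) = 1 := inv_mul_cancel₀ (by linarith)
          nlinarith [h9]
        have hbic : wBiconj F (d • x₀) 0 ≤ ((d * u : ℝ) : EReal) := by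
          rw [wBiconj]
          refine iSup_le fun w => ?_
          obtain ⟨x', μ⟩ := w
          have hxd : x' (d • x₀) = d * x' x₀ := by rw [map_smul, smul_eq_mul]
          have hμ0 : μ (0 : Y) = 0 := map_zero μ
          rcases sproc_ereal_cases (wConj F x' μ) with hW | ⟨v, hW⟩ | hW
          · exfalso
            have hall : ∀ s : ℝ, x' x₀ + s * c < u := fun s =>
              hEf (x', s) ⟨μ, by rw [hW]; exact bot_le⟩
            exact sproc_not_forall_affine (by linarith : c ≠ 0) hall
          · have hlt : x' x₀ + v * c < u := hEf (x', v) ⟨μ, by rw [hW]⟩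
            show ((x' (d • x₀) + μ (0 : Y) : ℝ) : EReal) - wConj F x' μ ≤ ((d * u : ℝ) : EReal)
            rw [hW, hxd, hμ0, ← EReal.coe_sub]
            refine EReal.coe_le_coe_iff.2 ?_
            have h9 : d * (x' x₀ + v * c) < d * u := mul_lt_mul_of_pos_left hlt hdpos
            have h10 : d * (x' x₀ + v * c) = d * x' x₀ + (d * c) * v := by ring
            rw [h10, hdc] at h9
            linarith
          · show ((x' (d • x₀) + μ (0 : Y) : ℝ) : EReal) - wConj F x' μ ≤ ((d * u : ℝ) : EReal)
            rw [hW, EReal.sub_top]; exact bot_le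
        have hchain : ((-t : ℝ) : EReal) ≤ ((d * u : ℝ) : EReal) - ((a' (d • x₀) : ℝ) : EReal) := by
          calc ((-t : ℝ) : EReal) ≤ ⨅ x : X, (F x 0 - ((a' x : ℝ) : EReal)) := hlow
            _ = ⨅ x : X, (wBiconj F x 0 - ((a' x : ℝ) : EReal)) := h5.1
            _ ≤ wBiconj F (d • x₀) 0 - ((a' (d • x₀) : ℝ) : EReal) :=
                iInf_le (fun x : X => wBiconj F x 0 - ((a' x : ℝ) : EReal)) (d • x₀)
            _ ≤ _ := EReal.sub_le_sub hbic le_rfl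
        have had : a' (d • x₀) = d * a' x₀ := by rw [map_smul, smul_eq_mul]
        rw [had, ← EReal.coe_sub] at hchain
        have hreal : -t ≤ d * u - d * a' x₀ := EReal.coe_le_coe_iff.1 hchain
        have h9 := mul_le_mul_of_nonpos_left hreal (le_of_lt hneg)
        have h10 : c * (d * u - d * a' x₀) = -u + a' x₀ := by
          have h11 : c * (d * u - d * a' x₀) = (d * c) * u - (d * c) * a' x₀ := by ring
          rw [h11, hdc]; ring
        rw [h10] at h9
        nlinarith [h9, hau]
      · -- c = 0
        obtain ⟨x₁, hx₁⟩ : ∃ x₁ : X, wBiconj F x₁ 0 - ((a' x₁ : ℝ) : EReal) ≠ ⊤ := by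
          by_contra hallx
          push_neg at hallx
          have h9 : (⨅ x : X, (wBiconj F x 0 - ((a' x : ℝ) : EReal))) = ⊤ := iInf_eq_top.2 hallx
          rw [← h5.1] at h9
          exact h5.2 h9
        have hbx : wBiconj F x₁ 0 ≠ ⊤ := by
          intro hh
          rw [hh, EReal.top_sub_coe] at hx₁
          exact hx₁ rfl
        set M : ℝ := (wBiconj F x₁ 0).toReal with hMdef
        have hM : wBiconj F x₁ 0 ≤ (M : EReal) := EReal.le_coe_toReal hbx
        have hmin : ∀ (x' : WeakDual ℝ X) (μ : Y →L[ℝ] ℝ),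
            ((x' x₁ + μ 0 : ℝ) : EReal) - wConj F x' μ ≤ (M : EReal) := by
          intro x' μ
          refine le_trans ?_ hM
          rw [wBiconj]
          exact le_iSup (fun w : WeakDual ℝ X × (Y →L[ℝ] ℝ) =>
            ((w.1 x₁ + w.2 0 : ℝ) : EReal) - wConj F w.1 w.2) (x', μ)
        have hau' : u < a' x₀ := by
          have h9 := hau
          rw [h0] at h9
          linarith [h9]
        set r : ℝ := max 1 ((M + t - a' x₁ + 1) / (a' x₀ - u)) with hrdef
        have hrpos : (0 : ℝ) < r := lt_of_lt_of_le one_pos (le_max_left _ _)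
        have hrb : M + t - a' x₁ + 1 ≤ r * (a' x₀ - u) := by
          have h9 := le_max_right 1 ((M + t - a' x₁ + 1) / (a' x₀ - u))
          have h10 : M + t - a' x₁ + 1 = ((M + t - a' x₁ + 1) / (a' x₀ - u)) * (a' x₀ - u) :=
            (div_mul_cancel₀ _ (by linarith : a' x₀ - u ≠ 0)).symm
          rw [h10]
          exact mul_le_mul_of_nonneg_right h9 (by linarith)
        have hbic2 : wBiconj F (x₁ + r • x₀) 0 ≤ ((M + r * u : ℝ) : EReal) := by
          rw [wBiconj]
          refine iSup_le fun w => ?_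
          obtain ⟨x', μ⟩ := w
          have hμ0 : μ (0 : Y) = 0 := map_zero μ
          have hxr : x' (x₁ + r • x₀) = x' x₁ + r * x' x₀ := by
            rw [map_add, map_smul, smul_eq_mul]
          rcases sproc_ereal_cases (wConj F x' μ) with hW | ⟨v, hW⟩ | hW
          · exfalso
            have h9 := hmin x' μ
            rw [hW, EReal.coe_sub_bot] at h9
            exact EReal.coe_ne_top M (top_le_iff.1 h9)
          · have hlt : x' x₀ + v * c < u := hEf (x', v) ⟨μ, by rw [hW]⟩
            rw [h0] at hlt
            simp only [mul_zero, add_zero] at hlt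
            have hm := hmin x' μ
            rw [hW, hμ0, ← EReal.coe_sub] at hm
            have hm' := EReal.coe_le_coe_iff.1 hm
            show ((x' (x₁ + r • x₀) + μ (0 : Y) : ℝ) : EReal) - wConj F x' μ
                ≤ ((M + r * u : ℝ) : EReal)
            rw [hW, hxr, hμ0, ← EReal.coe_sub]
            refine EReal.coe_le_coe_iff.2 ?_
            nlinarith [mul_lt_mul_of_pos_left hlt hrpos]
          · show ((x' (x₁ + r • x₀) + μ (0 : Y) : ℝ) : EReal) - wConj F x' μ
                ≤ ((M + r * u : ℝ) : EReal)
            rw [hW, EReal.sub_top]; exact bot_le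
        have hchain : ((-t : ℝ) : EReal)
            ≤ ((M + r * u : ℝ) : EReal) - ((a' (x₁ + r • x₀) : ℝ) : EReal) := by
          calc ((-t : ℝ) : EReal) ≤ ⨅ x : X, (F x 0 - ((a' x : ℝ) : EReal)) := hlow
            _ = ⨅ x : X, (wBiconj F x 0 - ((a' x : ℝ) : EReal)) := h5.1
            _ ≤ wBiconj F (x₁ + r • x₀) 0 - ((a' (x₁ + r • x₀) : ℝ) : EReal) :=
                iInf_le (fun x : X => wBiconj F x 0 - ((a' x : ℝ) : EReal)) (x₁ + r • x₀)
            _ ≤ _ := EReal.sub_le_sub hbic2 le_rfl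
        have had : a' (x₁ + r • x₀) = a' x₁ + r * a' x₀ := by
          rw [map_add, map_smul, smul_eq_mul]
        rw [had, ← EReal.coe_sub] at hchain
        have hreal := EReal.coe_le_coe_iff.1 hchain
        nlinarith [hreal, hrb]
    have hmem : (a', t) ∈ ({z : WeakDual ℝ X × ℝ | ∃ μ : Y →L[ℝ] ℝ,
          wConj F z.1 μ ≤ (z.2 : EReal)} ∩
        {z : WeakDual ℝ X × ℝ | hConj h z.1 = (z.2 : EReal)}) := by
      rw [← H6]
      exact ⟨hcl, ht⟩
    obtain ⟨⟨μ, hμ⟩, -⟩ := hmem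
    exact ⟨μ, by rw [ht]; exact hμ⟩
  · -- (B) → (A)
    intro hB x
    by_contra hxF
    push_neg at hxF
    obtain ⟨r, hq1, hq2⟩ := EReal.lt_iff_exists_real_btwn.1 hxF
    have hclosed : IsClosed {p : X × ℝ | h p.1 ≤ (p.2 : EReal)} := by
      have h1 : IsClosed {p : X × EReal | h p.1 ≤ p.2} :=
        lowerSemicontinuous_iff_isClosed_epigraph.1 hlsc
      have h2 : {p : X × ℝ | h p.1 ≤ (p.2 : EReal)} =
          (fun p : X × ℝ => (p.1, (p.2 : EReal))) ⁻¹' {p : X × EReal | h p.1 ≤ p.2} := rfl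
      rw [h2]
      exact h1.preimage (continuous_fst.prodMk (continuous_coe_real_ereal.comp continuous_snd))
    obtain ⟨x₀, hx₀⟩ := hproper
    obtain ⟨t₀, ht₀⟩ : ∃ t₀ : ℝ, h x₀ = (t₀ : EReal) :=
      ⟨_, (EReal.coe_toReal hx₀ (hbot x₀)).symm⟩
    have hx₀mem : ∀ n : ℝ, 0 ≤ n → (x₀, t₀ + n) ∈ {p : X × ℝ | h p.1 ≤ (p.2 : EReal)} := by
      intro n hn
      show h x₀ ≤ ((t₀ + n : ℝ) : EReal)
      rw [ht₀]
      exact EReal.coe_le_coe_iff.2 (by linarith)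
    have hnot1 : (x₀, t₀ - 1) ∉ {p : X × ℝ | h p.1 ≤ (p.2 : EReal)} := by
      show ¬ (h x₀ ≤ ((t₀ - 1 : ℝ) : EReal))
      rw [ht₀]
      exact fun hh => by have := EReal.coe_le_coe_iff.1 hh; linarith
    obtain ⟨f₁, u₁, hf₁, hp₁⟩ := geometric_hahn_banach_closed_point hconvex hclosed hnot1
    have hc₁ : f₁ (0, 1) < 0 := by
      have ha := hf₁ (x₀, t₀) (by simpa using hx₀mem 0 le_rfl)
      have hb := hp₁
      rw [sproc_dec X f₁ x₀ t₀] at ha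
      rw [sproc_dec X f₁ x₀ (t₀ - 1)] at hb
      nlinarith [ha, hb]
    have hnot2 : (x, r) ∉ {p : X × ℝ | h p.1 ≤ (p.2 : EReal)} :=
      fun hh => absurd hq2 (not_lt.2 hh)
    obtain ⟨f₂, u₂, hf₂, hp₂⟩ := geometric_hahn_banach_closed_point hconvex hclosed hnot2
    have hc₂ : f₂ (0, 1) ≤ 0 := by
      refine sproc_nonpos (A := f₂ (x₀, 0) + t₀ * f₂ (0, 1)) (u := u₂) fun n hn => ?_
      have h9 := hf₂ (x₀, t₀ + n) (hx₀mem n hn)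
      rw [sproc_dec X f₂ x₀ (t₀ + n)] at h9
      nlinarith [h9]
    obtain ⟨ε, hε, hεm⟩ :=
      sproc_exists_pos_mul_lt (u₁ - f₁ (x, r)) (f₂ (x, r) - u₂) (by linarith [hp₂])
    set f : (X × ℝ) →L[ℝ] ℝ := f₂ + ε • f₁ with hfdef
    set u : ℝ := u₂ + ε * u₁ with hudef
    have hfapp : ∀ p : X × ℝ, f p = f₂ p + ε * f₁ p := fun p => by
      rw [hfdef]
      simp [ContinuousLinearMap.add_apply, ContinuousLinearMap.smul_apply, smul_eq_mul]
    have hfu : ∀ p ∈ {p : X × ℝ | h p.1 ≤ (p.2 : EReal)}, f p < u := by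
      intro p hp
      rw [hfapp p, hudef]
      nlinarith [hf₂ p hp, mul_lt_mul_of_pos_left (hf₁ p hp) hε]
    have hfx : u < f (x, r) := by
      rw [hfapp (x, r), hudef]
      nlinarith [hεm, hp₂]
    set c : ℝ := f (0, 1) with hcdef
    have hc : c < 0 := by
      rw [hcdef, hfapp (0, 1)]
      nlinarith [hc₂, mul_lt_mul_of_pos_left hc₁ hε]
    have hg : ∀ (y : X) (s : ℝ), f (y, s) = f (y, 0) + s * c := fun y s => sproc_dec X f y s
    have hdpos : (0 : ℝ) < (-c)⁻¹ := inv_pos.2 (by linarith)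
    set d : ℝ := (-c)⁻¹ with hddef
    have hdc : d * c = -1 := by
      have h9 : d * (-c) = 1 := inv_mul_cancel₀ (by linarith)
      nlinarith [h9]
    set g : X →L[ℝ] ℝ := f.comp (ContinuousLinearMap.inl ℝ X ℝ) with hgdef
    have hgapp : ∀ y : X, g y = f (y, 0) := fun y => by
      rw [hgdef, ContinuousLinearMap.comp_apply, ContinuousLinearMap.inl_apply]
    set a' : WeakDual ℝ X := (d • g : X →L[ℝ] ℝ) with ha'def
    have ha'app : ∀ y : X, a' y = d * f (y, 0) := by
      intro y
      have h9 : a' y = d * g y := rfl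
      rw [h9, hgapp]
    set β : ℝ := d * u with hβdef
    have hβ : hConj h a' ≤ (β : EReal) := by
      rw [hConj]
      refine iSup_le fun y => ?_
      rcases sproc_ereal_cases (h y) with hy | ⟨v, hy⟩ | hy
      · exact absurd hy (hbot y)
      · have hmem : (y, v) ∈ {p : X × ℝ | h p.1 ≤ (p.2 : EReal)} := le_of_eq hy
        have h2 := hfu (y, v) hmem
        rw [hg y v] at h2
        rw [hy, ha'app y, ← EReal.coe_sub]
        refine EReal.coe_le_coe_iff.2 ?_
        have h9 : d * (f (y, 0) + v * c) < d * u := mul_lt_mul_of_pos_left h2 hdpos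
        have h10 : d * (f (y, 0) + v * c) = d * f (y, 0) + (d * c) * v := by ring
        rw [h10, hdc] at h9
        rw [hβdef]
        linarith
      · rw [hy, EReal.sub_top]; exact bot_le
    have hne' : hConj h a' ≠ ⊤ := fun hh => by
      rw [hh] at hβ
      exact EReal.coe_ne_top β (top_le_iff.1 hβ)
    obtain ⟨μ, hμ⟩ := hB a' hne'
    have hterm : ((a' x : ℝ) : EReal) - F x 0 ≤ hConj h a' := by
      have h1 : ((a' x + μ (0 : Y) : ℝ) : EReal) - F x 0 ≤ wConj F a' μ := by
        rw [wConj]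
        exact le_iSup (fun p : X × Y =>
          ((a' p.1 + μ p.2 : ℝ) : EReal) - F p.1 p.2) (x, (0 : Y))
      rw [map_zero, add_zero] at h1
      exact h1.trans hμ
    have hswap := sproc_swap hne' hterm
    have hhu : u < f (x, 0) + r * c := by rw [← hg]; exact hfx
    have hrlt : r < a' x - β := by
      rw [ha'app x, hβdef]
      have h9 : d * u < d * (f (x, 0) + r * c) := mul_lt_mul_of_pos_left hhu hdpos
      have h10 : d * (f (x, 0) + r * c) = d * f (x, 0) + (d * c) * r := by ring
      rw [h10, hdc] at h9
      linarith
    have hfin : ((a' x - β : ℝ) : EReal) ≤ ((a' x : ℝ) : EReal) - hConj h a' := by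
      rw [EReal.coe_sub]
      exact EReal.sub_le_sub le_rfl hβ
    have hcontra : ((r : ℝ) : EReal) < F x 0 :=
      lt_of_lt_of_le (lt_of_lt_of_le (EReal.coe_lt_coe_iff.2 hrlt) hfin) hswap
    exact absurd hq1 (not_lt.2 hcontra.le)
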